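/- For a power series A(u) = ∑_{k≥0} a_k u^k over K, the operator Λ on K[L] defined by Λ(f)(L) = ∫₀^L A(∂_u) f(u) du acts on the basis by Λ(L^n/n!) = ∑_{k=0}^n a_k · L^{n−k+1}/(n−k+1)!, and this Λ is a Hochschild 1-cocycle on the polynomial bialgebra K[L] (with L primitive). -/

import Mathlib

open Polynomial

variable {K : Type*} [CommRing K] [Algebra ℚ K]

/-- Formal integration `∫₀^L` of a polynomial. -/
noncomputable def polyIntegral (p : Polynomial K) : Polynomial K :=
  p.sum fun n c => (((n : ℚ) + 1)⁻¹ • c) • (Polynomial.X : Polynomial K) ^ (n + 1)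

/-- The operator `f ↦ ∫₀^L A(∂_u) f(u) du` on `K[L]`, for `A(u) = ∑_k a_k u^k`. -/
noncomputable def cocycleOp (a : ℕ → K) (p : Polynomial K) : Polynomial K :=
  polyIntegral (∑ k ∈ Finset.range (p.natDegree + 1), a k • (Polynomial.derivative^[k] p))

/-- The coproduct `Δ f = f(L ⊗ 1 + 1 ⊗ L)` on `K[L]`, realized in `K[L₁][L₂]` with the
first tensor factor as the outer variable `X` and the second as the inner variable
`C X`. -/
noncomputable def polyComul₂ (p : Polynomial K) : Polynomial (Polynomial K) :=
  Polynomial.aeval (Polynomial.X + Polynomial.C Polynomial.X) p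

/-- `id ⊗ Λ`, applying `Λ` to the second (inner, coefficient) tensor factor. -/
noncomputable def idTensorApply (Λ : Polynomial K → Polynomial K)
    (G : Polynomial (Polynomial K)) : Polynomial (Polynomial K) :=
  ∑ j ∈ Finset.range (G.natDegree + 1),
    Polynomial.C (Λ (G.coeff j)) * Polynomial.X ^ j

set_option linter.unusedSectionVars false

-- ## auxiliary lemmas

lemma polyIntegral_zero : polyIntegral (0 : Polynomial K) = 0 := by
  simp [polyIntegral]

lemma polyIntegral_hzero (n : ℕ) :
    ((((n : ℚ) + 1)⁻¹ • (0:K)) • (Polynomial.X : Polynomial K) ^ (n + 1)) = 0 := by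
  simp

lemma polyIntegral_add (p q : Polynomial K) :
    polyIntegral (p + q) = polyIntegral p + polyIntegral q := by
  unfold polyIntegral
  refine Polynomial.sum_add_index p q _ (fun n => polyIntegral_hzero n) ?_
  intro n b c
  rw [smul_add, add_smul]

lemma polyIntegral_smul (c : K) (p : Polynomial K) :
    polyIntegral (c • p) = c • polyIntegral p := by
  unfold polyIntegral
  rw [Polynomial.sum_smul_index p c _ (fun n => polyIntegral_hzero n), Polynomial.smul_sum]
  simp only [Polynomial.sum]
  refine Finset.sum_congr rfl fun n _ => ?_
  rw [mul_comm, ← smul_eq_mul, ← smul_assoc, smul_eq_mul, ← smul_smul, smul_comm c]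

lemma polyIntegral_monomial (c : K) (n : ℕ) :
    polyIntegral (c • (Polynomial.X : Polynomial K) ^ n) =
      (((n : ℚ) + 1)⁻¹ • c) • (Polynomial.X : Polynomial K) ^ (n + 1) := by
  rw [Polynomial.smul_X_eq_monomial]
  unfold polyIntegral
  exact Polynomial.sum_monomial_index c _ (polyIntegral_hzero n)

lemma iterate_deriv_add (k : ℕ) (p q : Polynomial K) :
    Polynomial.derivative^[k] (p + q) =
      Polynomial.derivative^[k] p + Polynomial.derivative^[k] q := by
  induction k generalizing p q with
  | zero => rfl
  | succ k ih =>
      rw [Function.iterate_succ_apply, Function.iterate_succ_apply,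
        Function.iterate_succ_apply, Polynomial.derivative_add, ih]

lemma cocycleOp_eq (a : ℕ → K) (p : Polynomial K) (N : ℕ) (h : p.natDegree < N) :
    cocycleOp a p =
      polyIntegral (∑ k ∈ Finset.range N, a k • (Polynomial.derivative^[k] p)) := by
  unfold cocycleOp
  congr 1
  refine Finset.sum_subset ?_ ?_
  · exact Finset.range_subset_range.mpr h
  · intro k _ hk
    rw [Finset.mem_range, not_lt] at hk
    rw [Polynomial.iterate_derivative_eq_zero (Nat.lt_of_succ_le hk), smul_zero]

lemma cocycleOp_zero (a : ℕ → K) : cocycleOp a (0 : Polynomial K) = 0 := by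
  simp [cocycleOp, Polynomial.iterate_derivative_zero, polyIntegral_zero]

lemma cocycleOp_add (a : ℕ → K) (p q : Polynomial K) :
    cocycleOp a (p + q) = cocycleOp a p + cocycleOp a q := by
  set N := max ((p + q).natDegree + 1) (max (p.natDegree + 1) (q.natDegree + 1)) with hN
  rw [cocycleOp_eq a p N (by omega), cocycleOp_eq a q N (by omega),
    cocycleOp_eq a (p + q) N (by omega), ← polyIntegral_add]
  congr 1
  rw [← Finset.sum_add_distrib]
  refine Finset.sum_congr rfl fun k _ => ?_
  rw [iterate_deriv_add, smul_add]

lemma cocycleOp_smul (a : ℕ → K) (c : K) (p : Polynomial K) :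
    cocycleOp a (c • p) = c • cocycleOp a p := by
  rw [cocycleOp_eq a (c • p) (p.natDegree + 1)
      (Nat.lt_succ_of_le (Polynomial.natDegree_smul_le c p)), cocycleOp, ← polyIntegral_smul,
    Finset.smul_sum]
  congr 1
  refine Finset.sum_congr rfl fun k _ => ?_
  rw [Polynomial.iterate_derivative_smul, smul_comm]

lemma cocycleOp_qsmul (a : ℕ → K) (q : ℚ) (p : Polynomial K) :
    cocycleOp a (q • p) = q • cocycleOp a p := by
  rw [← algebraMap_smul K q p, cocycleOp_smul, algebraMap_smul]

lemma polyIntegral_sum {ι : Type*} (s : Finset ι) (f : ι → Polynomial K) :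
    polyIntegral (∑ i ∈ s, f i) = ∑ i ∈ s, polyIntegral (f i) := by
  classical
  induction s using Finset.induction with
  | empty => simp [polyIntegral_zero]
  | @insert x s h ih => rw [Finset.sum_insert h, polyIntegral_add, ih, Finset.sum_insert h]

/-- The composite rational coefficient in `Λ(X^n)`. -/
noncomputable def bb (a : ℕ → K) (n k : ℕ) : K :=
  ((n.descFactorial k : ℚ) * (((n - k : ℕ) : ℚ) + 1)⁻¹) • a k

lemma natCast_mul_eq_qsmul (d : ℕ) (c : K) : (d : K) * c = (d : ℚ) • c := by
  rw [Algebra.smul_def, map_natCast]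

lemma cocycleOp_X_pow [Nontrivial K] (a : ℕ → K) (n : ℕ) :
    cocycleOp a ((Polynomial.X : Polynomial K) ^ n) =
      ∑ k ∈ Finset.range (n + 1), bb a n k • (Polynomial.X : Polynomial K) ^ (n - k + 1) := by
  rw [cocycleOp_eq a _ (n + 1) (by simp), polyIntegral_sum]
  refine Finset.sum_congr rfl fun k _ => ?_
  rw [Polynomial.iterate_derivative_X_pow_eq_smul, smul_smul, polyIntegral_monomial, bb]
  congr 1
  rw [mul_comm (a k), natCast_mul_eq_qsmul, smul_smul, mul_comm]

lemma fact_aux {n k : ℕ} (h : k ≤ n) :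
    (n.factorial : ℚ)⁻¹ * ((n.descFactorial k : ℚ) * (((n - k : ℕ) : ℚ) + 1)⁻¹) =
      ((n - k + 1).factorial : ℚ)⁻¹ := by
  obtain ⟨m, rfl⟩ := Nat.exists_eq_add_of_le h
  have h1 : (k + m) - k = m := by omega
  have h2 : (m.factorial : ℚ) * ((k + m).descFactorial k : ℚ) = ((k + m).factorial : ℚ) := by
    exact_mod_cast congrArg (Nat.cast : ℕ → ℚ)
      (by simpa [h1] using Nat.factorial_mul_descFactorial (Nat.le_add_right k m))
  rw [h1, Nat.factorial_succ]
  have hm : ((m : ℚ) + 1) ≠ 0 := by positivity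
  have hf1 : (((k + m).factorial : ℚ)) ≠ 0 := by
    exact_mod_cast Nat.factorial_ne_zero _
  have hf2 : ((m.factorial : ℚ)) ≠ 0 := by
    exact_mod_cast Nat.factorial_ne_zero _
  push_cast
  field_simp
  linear_combination h2

lemma part1 (a : ℕ → K) (n : ℕ) :
    cocycleOp a ((n.factorial : ℚ)⁻¹ • (Polynomial.X : Polynomial K) ^ n) =
      ∑ k ∈ Finset.range (n + 1),
        a k • (((n - k + 1).factorial : ℚ)⁻¹ •
          (Polynomial.X : Polynomial K) ^ (n - k + 1)) := by
  cases subsingleton_or_nontrivial K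
  · apply Subsingleton.elim
  rw [cocycleOp_qsmul, cocycleOp_X_pow, Finset.smul_sum]
  refine Finset.sum_congr rfl fun k hk => ?_
  have hk' : k ≤ n := by
    rw [Finset.mem_range] at hk; omega
  rw [bb, smul_assoc, smul_smul, smul_comm (a k), fact_aux hk']

-- ## lemmas on `Polynomial (Polynomial K)`

lemma algebraMap_KPP (c : K) :
    algebraMap K (Polynomial (Polynomial K)) c = Polynomial.C (Polynomial.C c) := by
  rw [Polynomial.algebraMap_apply, Polynomial.algebraMap_apply, Algebra.algebraMap_self_apply]

lemma smulPP (c : K) (P : Polynomial (Polynomial K)) :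
    c • P = Polynomial.C (Polynomial.C c) * P := by
  rw [Algebra.smul_def, algebraMap_KPP]

lemma C_Ksmul (c : K) (p : Polynomial K) :
    (Polynomial.C (c • p) : Polynomial (Polynomial K)) = c • Polynomial.C p := by
  rw [Polynomial.smul_eq_C_mul, map_mul, smulPP]

lemma C_qsmul (q : ℚ) (p : Polynomial K) :
    (Polynomial.C (q • p) : Polynomial (Polynomial K)) = q • Polynomial.C p := by
  rw [← algebraMap_smul K q p, C_Ksmul, algebraMap_smul]

lemma map_C_smul (c : K) (p : Polynomial K) :
    Polynomial.map (Polynomial.C : K →+* Polynomial K) (c • p) =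
      c • Polynomial.map (Polynomial.C : K →+* Polynomial K) p := by
  rw [Polynomial.smul_eq_C_mul, Polynomial.map_mul, Polynomial.map_C, smulPP]

-- ## idTensorApply lemmas

lemma idTensorApply_eq (Λ : Polynomial K → Polynomial K) (hΛ : Λ 0 = 0)
    (G : Polynomial (Polynomial K)) (N : ℕ) (h : G.natDegree < N) :
    idTensorApply Λ G =
      ∑ j ∈ Finset.range N, Polynomial.C (Λ (G.coeff j)) * Polynomial.X ^ j := by
  refine Finset.sum_subset (Finset.range_subset_range.mpr h) ?_
  intro j _ hj
  rw [Finset.mem_range, not_lt] at hj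
  rw [Polynomial.coeff_eq_zero_of_natDegree_lt (by omega), hΛ, map_zero, zero_mul]

lemma idTensorApply_cocycleOp_add (a : ℕ → K) (G H : Polynomial (Polynomial K)) :
    idTensorApply (cocycleOp a) (G + H) =
      idTensorApply (cocycleOp a) G + idTensorApply (cocycleOp a) H := by
  set N := max ((G + H).natDegree + 1) (max (G.natDegree + 1) (H.natDegree + 1)) with hN
  have h1 : (G + H).natDegree < N := by
    have := Polynomial.natDegree_add_le G H
    omega
  rw [idTensorApply_eq _ (cocycleOp_zero a) _ N h1,
    idTensorApply_eq _ (cocycleOp_zero a) G N (by omega),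
    idTensorApply_eq _ (cocycleOp_zero a) H N (by omega), ← Finset.sum_add_distrib]
  refine Finset.sum_congr rfl fun j _ => ?_
  rw [Polynomial.coeff_add, cocycleOp_add, map_add, add_mul]

set_option maxHeartbeats 1000000 in
lemma idTensorApply_cocycleOp_smul (a : ℕ → K) (c : K) (G : Polynomial (Polynomial K)) :
    idTensorApply (cocycleOp a) (c • G) = c • idTensorApply (cocycleOp a) G := by
  have hdeg : (c • G).natDegree < G.natDegree + 1 := by
    rw [smulPP]
    refine Nat.lt_succ_of_le (le_trans (Polynomial.natDegree_mul_le) ?_)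
    simp
  rw [idTensorApply_eq _ (cocycleOp_zero a) (c • G) (G.natDegree + 1) hdeg,
    idTensorApply, Finset.smul_sum]
  refine Finset.sum_congr rfl fun j _ => ?_
  rw [Polynomial.coeff_smul, cocycleOp_smul, C_Ksmul, smul_mul_assoc]

-- ## rational coefficient identities

lemma factcast {m : ℕ} : ((m + 1).factorial : ℚ) = ((m : ℚ) + 1) * (m.factorial : ℚ) := by
  rw [Nat.factorial_succ]; push_cast; ring

lemma desccast {k m : ℕ} :
    ((m.factorial : ℚ)) * (((k + m).descFactorial k : ℚ)) = ((k + m).factorial : ℚ) := by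
  exact_mod_cast congrArg (Nat.cast : ℕ → ℚ)
    (by simpa using Nat.factorial_mul_descFactorial (Nat.le_add_right k m))

lemma idII {n k : ℕ} (hk : k ≤ n) :
    (n.descFactorial k : ℚ) * (((n - k : ℕ) : ℚ) + 1)⁻¹ =
      (n.factorial : ℚ) * (((n - k + 1).factorial : ℚ))⁻¹ := by
  obtain ⟨m, rfl⟩ := Nat.exists_eq_add_of_le hk
  have h1 : (k + m) - k = m := by omega
  have hd := desccast (k := k) (m := m)
  rw [h1, factcast]
  have hm : ((m : ℚ) + 1) ≠ 0 := by positivity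
  have hf1 : (((k + m).factorial : ℚ)) ≠ 0 := by exact_mod_cast Nat.factorial_ne_zero _
  have hf2 : ((m.factorial : ℚ)) ≠ 0 := by exact_mod_cast Nat.factorial_ne_zero _
  field_simp
  linear_combination hd

lemma idI {n k j : ℕ} (hk : k ≤ n) (hj : j ≤ n - k + 1) :
    ((n - k + 1).choose j : ℚ) * ((n.descFactorial k : ℚ) * (((n - k : ℕ) : ℚ) + 1)⁻¹) =
      (n.factorial : ℚ) * ((j.factorial : ℚ))⁻¹ * (((n - k + 1 - j).factorial : ℚ))⁻¹ := by
  obtain ⟨m, rfl⟩ := Nat.exists_eq_add_of_le hk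
  have h1 : (k + m) - k = m := by omega
  rw [h1] at hj ⊢
  have hd := desccast (k := k) (m := m)
  have hc : (((m + 1).choose j : ℚ)) =
      ((m + 1).factorial : ℚ) / ((j.factorial : ℚ) * (((m + 1 - j).factorial : ℚ))) :=
    Nat.cast_choose ℚ hj
  rw [hc, factcast]
  have hm : ((m : ℚ) + 1) ≠ 0 := by positivity
  have hf1 : (((k + m).factorial : ℚ)) ≠ 0 := by exact_mod_cast Nat.factorial_ne_zero _
  have hf2 : ((m.factorial : ℚ)) ≠ 0 := by exact_mod_cast Nat.factorial_ne_zero _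
  have hf3 : ((j.factorial : ℚ)) ≠ 0 := by exact_mod_cast Nat.factorial_ne_zero _
  have hf4 : (((m + 1 - j).factorial : ℚ)) ≠ 0 := by exact_mod_cast Nat.factorial_ne_zero _
  field_simp
  linear_combination hd

lemma idIII {n k j : ℕ} (h : j + k ≤ n) :
    (n.choose j : ℚ) * (((n - j).descFactorial k : ℚ) * ((((n - j) - k : ℕ) : ℚ) + 1)⁻¹) =
      (n.factorial : ℚ) * ((j.factorial : ℚ))⁻¹ * (((n - k + 1 - j).factorial : ℚ))⁻¹ := by
  obtain ⟨m, rfl⟩ := Nat.exists_eq_add_of_le h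
  have h1 : (j + k + m) - j = k + m := by omega
  have h2 : (k + m) - k = m := by omega
  have h3 : (j + k + m) - k + 1 - j = m + 1 := by omega
  rw [h1, h2, h3]
  have hd := desccast (k := k) (m := m)
  have hc : (((j + k + m).choose j : ℚ)) =
      ((j + k + m).factorial : ℚ) / ((j.factorial : ℚ) * (((k + m).factorial : ℚ))) := by
    have := Nat.cast_choose ℚ (show j ≤ j + k + m by omega)
    rwa [h1] at this
  rw [hc, factcast]
  have hm : ((m : ℚ) + 1) ≠ 0 := by positivity
  have hf1 : (((j + k + m).factorial : ℚ)) ≠ 0 := by exact_mod_cast Nat.factorial_ne_zero _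
  have hf2 : ((m.factorial : ℚ)) ≠ 0 := by exact_mod_cast Nat.factorial_ne_zero _
  have hf3 : ((j.factorial : ℚ)) ≠ 0 := by exact_mod_cast Nat.factorial_ne_zero _
  have hf5 : (((k + m).factorial : ℚ)) ≠ 0 := by exact_mod_cast Nat.factorial_ne_zero _
  field_simp
  linear_combination hd

-- ## the three expansions

/-- common term: `(n!/(j!(n-k+1-j)!) · a_k) • X^j (C X)^(n-k+1-j)` -/
noncomputable def tT (a : ℕ → K) (n k j : ℕ) : Polynomial (Polynomial K) :=
  (((n.factorial : ℚ) * ((j.factorial : ℚ))⁻¹ * (((n - k + 1 - j).factorial : ℚ))⁻¹) • a k) •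
    ((Polynomial.X : Polynomial (Polynomial K)) ^ j *
      (Polynomial.C (Polynomial.X : Polynomial K)) ^ (n - k + 1 - j))

lemma lhs_expand [Nontrivial K] (a : ℕ → K) (n : ℕ) :
    polyComul₂ (cocycleOp a ((Polynomial.X : Polynomial K) ^ n)) =
      ∑ k ∈ Finset.range (n + 1), ∑ j ∈ Finset.range (n - k + 1 + 1), tT a n k j := by
  rw [cocycleOp_X_pow, polyComul₂, map_sum]
  refine Finset.sum_congr rfl fun k hk => ?_
  have hk' : k ≤ n := by rw [Finset.mem_range] at hk; omega
  rw [map_smul, map_pow, Polynomial.aeval_X, add_pow, Finset.smul_sum]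
  refine Finset.sum_congr rfl fun j hj => ?_
  have hj' : j ≤ n - k + 1 := by rw [Finset.mem_range] at hj; omega
  rw [bb, tT]
  have hc : ((((n - k + 1).choose j : ℕ)) : Polynomial (Polynomial K)) =
      algebraMap ℚ (Polynomial (Polynomial K)) (((n - k + 1).choose j : ℚ)) := by
    rw [map_natCast]
  rw [hc, mul_comm _ (algebraMap ℚ (Polynomial (Polynomial K)) _), ← Algebra.smul_def,
    smul_comm, smul_assoc, smul_smul, idI hk' hj', ← smul_assoc (_ : ℚ) (a k)]

lemma rhs1_expand [Nontrivial K] (a : ℕ → K) (n : ℕ) :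
    Polynomial.map (Polynomial.C : K →+* Polynomial K) (cocycleOp a ((Polynomial.X : Polynomial K) ^ n)) =
      ∑ k ∈ Finset.range (n + 1), tT a n k (n - k + 1) := by
  rw [cocycleOp_X_pow, ← Polynomial.coe_mapRingHom, map_sum]
  refine Finset.sum_congr rfl fun k hk => ?_
  have hk' : k ≤ n := by rw [Finset.mem_range] at hk; omega
  rw [Polynomial.coe_mapRingHom, map_C_smul, Polynomial.map_pow, Polynomial.map_X, tT]
  have h0 : n - k + 1 - (n - k + 1) = 0 := Nat.sub_self _
  rw [h0, pow_zero, mul_one, bb, Nat.factorial_zero]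
  rw [smul_assoc, smul_assoc]
  congr 1
  rw [idII hk']
  norm_num

lemma polyComul₂_X_pow (n : ℕ) :
    polyComul₂ ((Polynomial.X : Polynomial K) ^ n) =
      ((Polynomial.X : Polynomial (Polynomial K)) + Polynomial.C Polynomial.X) ^ n := by
  rw [polyComul₂, map_pow, Polynomial.aeval_X]

lemma natDegree_comul_pow [Nontrivial K] (n : ℕ) :
    (((Polynomial.X : Polynomial (Polynomial K)) + Polynomial.C Polynomial.X) ^ n).natDegree
      = n := by
  have h1 : ((Polynomial.X : Polynomial (Polynomial K)) + Polynomial.C Polynomial.X).Monic :=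
    Polynomial.monic_X_add_C _
  rw [h1.natDegree_pow, Polynomial.natDegree_X_add_C, mul_one]

lemma rhs2_expand [Nontrivial K] (a : ℕ → K) (n : ℕ) :
    idTensorApply (cocycleOp a) (polyComul₂ ((Polynomial.X : Polynomial K) ^ n)) =
      ∑ k ∈ Finset.range (n + 1), ∑ j ∈ Finset.range (n - k + 1), tT a n k j := by
  rw [polyComul₂_X_pow, idTensorApply, natDegree_comul_pow]
  have step : ∀ j ∈ Finset.range (n + 1),
      Polynomial.C (cocycleOp a
          ((((Polynomial.X : Polynomial (Polynomial K)) + Polynomial.C Polynomial.X) ^ n).coeff j))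
          * Polynomial.X ^ j =
        ∑ k ∈ Finset.range (n - j + 1),
          ((n.choose j : ℚ) • bb a (n - j) k) •
            ((Polynomial.C (Polynomial.X : Polynomial K)) ^ (n - j - k + 1) *
              Polynomial.X ^ j) := by
    intro j hj
    rw [Polynomial.coeff_X_add_C_pow]
    have hx : (Polynomial.X : Polynomial K) ^ (n - j) * ((n.choose j : ℕ) : Polynomial K) =
        ((n.choose j : ℚ)) • (Polynomial.X : Polynomial K) ^ (n - j) := by
      rw [mul_comm, ← map_natCast (algebraMap ℚ (Polynomial K)), ← Algebra.smul_def]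
    rw [hx, cocycleOp_qsmul, cocycleOp_X_pow, C_qsmul, map_sum, smul_mul_assoc,
      Finset.sum_mul]
    rw [Finset.smul_sum]
    refine Finset.sum_congr rfl fun k _ => ?_
    rw [C_Ksmul, map_pow, smul_mul_assoc, smul_assoc]
  rw [Finset.sum_congr rfl step]
  rw [Finset.sum_comm' (t := fun j => Finset.range (n - j + 1))
    (s' := fun k => Finset.range (n - k + 1)) (t' := Finset.range (n + 1))
    (by intro j k; simp only [Finset.mem_range]; omega)]
  refine Finset.sum_congr rfl fun k hk => Finset.sum_congr rfl fun j hj => ?_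
  rw [Finset.mem_range] at hk hj
  have hjk : j + k ≤ n := by omega
  have he : n - j - k + 1 = n - k + 1 - j := by omega
  rw [tT, bb, he, mul_comm ((Polynomial.C (Polynomial.X : Polynomial K)) ^ (n - k + 1 - j)),
    smul_smul, idIII hjk]

lemma part2_X_pow [Nontrivial K] (a : ℕ → K) (n : ℕ) :
    polyComul₂ (cocycleOp a ((Polynomial.X : Polynomial K) ^ n)) =
      Polynomial.map (Polynomial.C : K →+* Polynomial K)
          (cocycleOp a ((Polynomial.X : Polynomial K) ^ n)) +
        idTensorApply (cocycleOp a) (polyComul₂ ((Polynomial.X : Polynomial K) ^ n)) := by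
  rw [lhs_expand, rhs1_expand, rhs2_expand,
    Finset.sum_congr rfl (fun k _ => Finset.sum_range_succ (tT a n k) (n - k + 1)),
    Finset.sum_add_distrib, add_comm]

lemma polyComul₂_add (p q : Polynomial K) :
    polyComul₂ (p + q) = polyComul₂ p + polyComul₂ q := by
  unfold polyComul₂; rw [map_add]

lemma polyComul₂_smul (c : K) (p : Polynomial K) :
    polyComul₂ (c • p) = c • polyComul₂ p := by
  unfold polyComul₂; rw [map_smul]

lemma part2 (a : ℕ → K) (f : Polynomial K) :
    polyComul₂ (cocycleOp a f) =
      Polynomial.map (Polynomial.C : K →+* Polynomial K) (cocycleOp a f) +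
        idTensorApply (cocycleOp a) (polyComul₂ f) := by
  cases subsingleton_or_nontrivial K
  · apply Subsingleton.elim
  induction f using Polynomial.induction_on' with
  | add p q hp hq =>
      rw [cocycleOp_add, polyComul₂_add, polyComul₂_add, idTensorApply_cocycleOp_add,
        Polynomial.map_add, hp, hq]
      abel
  | monomial m c =>
      rw [← Polynomial.smul_X_eq_monomial, cocycleOp_smul, polyComul₂_smul, polyComul₂_smul,
        map_C_smul, idTensorApply_cocycleOp_smul, part2_X_pow, smul_add]

/-- The operator `Λ f = ∫₀^L A(∂_u) f(u) du` acts on the basis of `K[L]` by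
`Λ(L^n/n!) = ∑_{k=0}^n a_k L^{n-k+1}/(n-k+1)!`, and `Λ` is a Hochschild 1-cocycle on the
polynomial bialgebra `K[L]` (with `L` primitive):
`Δ(Λ f) = (Λ f) ⊗ 1 + (id ⊗ Λ)(Δ f)`. -/
theorem cocycleOp_basis_and_cocycle (a : ℕ → K) :
    (∀ n : ℕ, cocycleOp a ((n.factorial : ℚ)⁻¹ • (Polynomial.X : Polynomial K) ^ n) =
      ∑ k ∈ Finset.range (n + 1),
        a k • (((n - k + 1).factorial : ℚ)⁻¹ •
          (Polynomial.X : Polynomial K) ^ (n - k + 1))) ∧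
    (∀ f : Polynomial K,
      polyComul₂ (cocycleOp a f) =
        Polynomial.map (Polynomial.C : K →+* Polynomial K) (cocycleOp a f) +
          idTensorApply (cocycleOp a) (polyComul₂ f)) := by
  exact ⟨part1 a, part2 a⟩
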